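/- Let rays be vertical half-lines L(s,t) = {t} × (−∞, s] and let each row's rectangles be pairwise disjoint intervals at the same integer height with at most one rectangle per row containing any given x-coordinate t. If solutions for a left and a right subproblem select rectangles from disjoint rectangle sets derived from the original rows (with at most one original rectangle split into two pieces per row), then for every ray the amount covered by the combined original-rectangle solution equals the sum of the amounts covered by the left solution, the right solution, and the pre-selected middle rectangles. -/
import Mathlib


/-- Splitting into subproblems preserves ray coverage: if the derived rectangle sets
(left, right, middle) are pairwise disjoint, per row at most one derived rectangle
intersects the ray `L(s,t)`, and a derived rectangle intersects `L(s,t)` iff its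
originating rectangle does, then the amount covered on the ray by the combined
original-rectangle solution equals the sum of the amounts covered by the left
solution, the right solution, and the middle selection. -/
theorem stmt19 {Orig Der ι : Type*} [DecidableEq Orig] [DecidableEq Der] [DecidableEq ι]
    (row : Orig → ι) (origOf : Der → Orig)
    (loO hiO hgtO : Orig → ℤ) (loD hiD hgtD : Der → ℤ) (val : ι → ℝ)
    (hvalpos : ∀ i, 0 < val i)
    (SL SR SM : Finset Der) (s t : ℤ)
    (hdisj1 : Disjoint SL SR) (hdisj2 : Disjoint SL SM) (hdisj3 : Disjoint SR SM)
    -- a derived rectangle has the same height as its original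
    (hhgt : ∀ x : Der, hgtD x = hgtO (origOf x))
    -- within a row, at most one original rectangle contains any `x`-coordinate
    (huniqO : ∀ y z : Orig, row y = row z →
      loO y ≤ t → t < hiO y → loO z ≤ t → t < hiO z → y = z)
    -- within a row, at most one selected derived rectangle contains `t`
    (huniqD : ∀ x ∈ SL ∪ SR ∪ SM, ∀ x' ∈ SL ∪ SR ∪ SM,
      row (origOf x) = row (origOf x') →
      loD x ≤ t → t < hiD x → loD x' ≤ t → t < hiD x' → x = x')
    -- a derived rectangle contains `t` iff its originating rectangle does
    (hiff : ∀ x ∈ SL ∪ SR ∪ SM,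
      ((loD x ≤ t ∧ t < hiD x) ↔ (loO (origOf x) ≤ t ∧ t < hiO (origOf x)))) :
    ∑ y ∈ ((SL ∪ SR ∪ SM).image origOf).filter
        (fun y => loO y ≤ t ∧ t < hiO y ∧ hgtO y ≤ s), val (row y)
      = (∑ x ∈ SL.filter (fun x => loD x ≤ t ∧ t < hiD x ∧ hgtD x ≤ s), val (row (origOf x)))
        + (∑ x ∈ SR.filter (fun x => loD x ≤ t ∧ t < hiD x ∧ hgtD x ≤ s), val (row (origOf x)))
        + (∑ x ∈ SM.filter (fun x => loD x ≤ t ∧ t < hiD x ∧ hgtD x ≤ s), val (row (origOf x))) := by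
  classical
  set S := SL ∪ SR ∪ SM with hS
  have key : ((S.image origOf).filter
        (fun y => loO y ≤ t ∧ t < hiO y ∧ hgtO y ≤ s))
      = (S.filter (fun x => loD x ≤ t ∧ t < hiD x ∧ hgtD x ≤ s)).image origOf := by
    ext y
    simp only [Finset.mem_filter, Finset.mem_image]
    constructor
    · rintro ⟨⟨x, hx, rfl⟩, h1, h2, h3⟩
      have := (hiff x hx).mpr ⟨h1, h2⟩
      exact ⟨x, ⟨hx, this.1, this.2, by rw [hhgt]; exact h3⟩, rfl⟩
    · rintro ⟨x, hx', rfl⟩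
      have := (hiff x hx'.1).mp ⟨hx'.2.1, hx'.2.2.1⟩
      exact ⟨⟨x, hx'.1, rfl⟩, this.1, this.2, by rw [← hhgt]; exact hx'.2.2.2⟩
  have hinj : Set.InjOn origOf
      ↑(S.filter (fun x => loD x ≤ t ∧ t < hiD x ∧ hgtD x ≤ s)) := by
    intro x hx x' hx' heq
    simp only [Finset.coe_filter, Set.mem_setOf_eq] at hx hx'
    exact huniqD x hx.1 x' hx'.1 (by rw [heq]) hx.2.1 hx.2.2.1 hx'.2.1 hx'.2.2.1
  rw [key, Finset.sum_image (fun x hx x' hx' h => hinj (by simpa using hx) (by simpa using hx') h)]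
  have hsplit : S.filter (fun x => loD x ≤ t ∧ t < hiD x ∧ hgtD x ≤ s)
      = SL.filter (fun x => loD x ≤ t ∧ t < hiD x ∧ hgtD x ≤ s)
        ∪ SR.filter (fun x => loD x ≤ t ∧ t < hiD x ∧ hgtD x ≤ s)
        ∪ SM.filter (fun x => loD x ≤ t ∧ t < hiD x ∧ hgtD x ≤ s) := by
    simp [hS, Finset.filter_union]
  rw [hsplit, Finset.sum_union, Finset.sum_union]
  · exact Finset.disjoint_filter_filter hdisj1
  · exact Finset.disjoint_union_left.mpr
      ⟨Finset.disjoint_filter_filter hdisj2, Finset.disjoint_filter_filter hdisj3⟩
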